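/- arXiv:1402.6787 — 6 statements merged into one kernel-verified Lean document; each statement's English description precedes it below -/
import Mathlib

section
/- Let E_1,...,E_k be the edge sets of k independent graphs on a common vertex set V, each distributed as a depth-1 MFNG sample from W_1(P,ℓ) (with independently drawn categories in each graph). Then the intersection graph G=(V, ∩_{i=1}^k E_i) has the same distribution as a sample from the depth-k measure W_k(P,ℓ). -/
open Finset

lemma key_sum (k : ℕ) (q : Fin k → ℝ) (e : Bool) :
    (∑ b : Fin k → Bool,
        (if ((∀ i, b i = true) ↔ e = true) then (1:ℝ) else 0) *
          ∏ i, (if b i then q i else 1 - q i))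
      = if e = true then ∏ i, q i else 1 - ∏ i, q i := by
  have hall : ∀ F : (Fin k → Bool) → ℝ,
      (∑ b : Fin k → Bool, (if (∀ i, b i = true) then (1:ℝ) else 0) * F b)
        = F (fun _ => true) := by
    intro F
    rw [Finset.sum_eq_single (fun _ => true)]
    · simp
    · intro b _ hb
      have h : ¬ ∀ i, b i = true := fun h => hb (funext fun i => h i)
      simp [h]
    · simp
  have htot : (∑ b : Fin k → Bool, ∏ i, (if b i then q i else 1 - q i)) = 1 := by
    have h := Finset.prod_univ_sum (fun _ : Fin k => (univ : Finset Bool))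
      (fun i x => if x then q i else 1 - q i)
    rw [Fintype.piFinset_univ] at h
    rw [← h]
    simp
  cases e with
  | true =>
      simp only [iff_true]
      have := hall (fun b => ∏ i, (if b i then q i else 1 - q i))
      simpa using this
  | false =>
      simp only [Bool.false_eq_true, iff_false, if_false]
      have hsplit : ∀ b : Fin k → Bool,
          (if ¬ (∀ i, b i = true) then (1:ℝ) else 0) *
              ∏ i, (if b i then q i else 1 - q i)
            = (∏ i, (if b i then q i else 1 - q i))
              - (if (∀ i, b i = true) then (1:ℝ) else 0) *
                  ∏ i, (if b i then q i else 1 - q i) := by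
        intro b; by_cases h : ∀ i, b i = true <;> simp [h]
      rw [Finset.sum_congr rfl (fun b _ => hsplit b), Finset.sum_sub_distrib, htot,
        hall (fun b => ∏ i, (if b i then q i else 1 - q i))]
      simp


/-- The joint law of the edge indicators of a depth-`k` MFNG sample
`W_k(P, l)` on `n` nodes: the probability of observing the edge
configuration `E` (on unordered pairs of distinct vertices, represented by
pairs `p` with `p.1 < p.2`). Each node independently receives a `k`-tuple of
categories with coordinates i.i.d. distributed by `l`, and conditional on
categories each pair is independently an edge with probability
`∏ r, P (c u r) (c v r)`. -/
noncomputable def mfngLaw (m n k : ℕ) (P : Fin m → Fin m → ℝ) (l : Fin m → ℝ)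
    (E : {p : Fin n × Fin n // p.1 < p.2} → Bool) : ℝ :=
  ∑ c : Fin n → Fin k → Fin m,
    (∏ u, ∏ r, l (c u r)) *
      ∏ p : {p : Fin n × Fin n // p.1 < p.2},
        (if E p then ∏ r, P (c p.1.1 r) (c p.1.2 r)
         else 1 - ∏ r, P (c p.1.1 r) (c p.1.2 r))

/-- per-pair factor of the depth-1 law -/
noncomputable def pairF (m n : ℕ) (P : Fin m → Fin m → ℝ)
    (c : Fin n → Fin 1 → Fin m) (p : {p : Fin n × Fin n // p.1 < p.2}) (b : Bool) : ℝ :=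
  if b then P (c p.1.1 0) (c p.1.2 0) else 1 - P (c p.1.1 0) (c p.1.2 0)


set_option maxHeartbeats 1000000 in
/-- the intersection of `k` independent depth-1 MFNG samples
from `W_1(P, l)` has the same distribution as a depth-`k` sample from
`W_k(P, l)`: for every edge configuration `E`, the probability that the
pointwise intersection of the `k` independent depth-1 samples equals `E`
is `mfngLaw m n k P l E`. -/
theorem mfng_intersection_law (m n k : ℕ)
    (P : Fin m → Fin m → ℝ)
    (hsymm : ∀ i j, P i j = P j i)
    (hP0 : ∀ i j, 0 ≤ P i j) (hP1 : ∀ i j, P i j ≤ 1)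
    (l : Fin m → ℝ) (hl0 : ∀ i, 0 ≤ l i) (hl1 : ∑ i, l i = 1)
    (E : {p : Fin n × Fin n // p.1 < p.2} → Bool) :
    ∑ Es : Fin k → ({p : Fin n × Fin n // p.1 < p.2} → Bool),
        (∏ i, mfngLaw m n 1 P l (Es i)) *
          (if ∀ p, ((∀ i, Es i p = true) ↔ E p = true) then 1 else 0)
      = mfngLaw m n k P l E := by
  classical
  have h1 : ∀ Es' : ({p : Fin n × Fin n // p.1 < p.2}) → Bool, mfngLaw m n 1 P l Es'
      = ∑ c : Fin n → Fin 1 → Fin m,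
          (∏ u, l (c u 0)) * ∏ p : ({p : Fin n × Fin n // p.1 < p.2}), pairF m n P c p (Es' p) := by
    intro Es'
    unfold mfngLaw pairF
    simp [Fin.prod_univ_one]
  have h2 : ∀ Es : Fin k → (({p : Fin n × Fin n // p.1 < p.2}) → Bool),
      (∏ i, mfngLaw m n 1 P l (Es i))
        = ∑ cc : Fin k → (Fin n → Fin 1 → Fin m),
            ∏ i, ((∏ u, l (cc i u 0)) * ∏ p : ({p : Fin n × Fin n // p.1 < p.2}), pairF m n P (cc i) p (Es i p)) := by
    intro Es
    simp only [h1]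
    rw [Finset.prod_univ_sum (fun _ => (univ : Finset (Fin n → Fin 1 → Fin m)))]
    rw [Fintype.piFinset_univ]
  calc
    (∑ Es : Fin k → (({p : Fin n × Fin n // p.1 < p.2}) → Bool),
        (∏ i, mfngLaw m n 1 P l (Es i)) *
          (if ∀ p, ((∀ i, Es i p = true) ↔ E p = true) then 1 else 0))
      = ∑ cc : Fin k → (Fin n → Fin 1 → Fin m),
          (∏ i, ∏ u, l (cc i u 0)) *
            ∑ Es : Fin k → (({p : Fin n × Fin n // p.1 < p.2}) → Bool),
              ∏ p : ({p : Fin n × Fin n // p.1 < p.2}),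
                ((if ((∀ i, Es i p = true) ↔ E p = true) then (1:ℝ) else 0) *
                  ∏ i, pairF m n P (cc i) p (Es i p)) := by
        simp only [h2, Finset.sum_mul]
        rw [Finset.sum_comm]
        refine Finset.sum_congr rfl fun cc _ => ?_
        rw [Finset.mul_sum]
        refine Finset.sum_congr rfl fun Es _ => ?_
        rw [Finset.prod_mul_distrib]
        have hind : (if ∀ p, ((∀ i, Es i p = true) ↔ E p = true) then (1:ℝ) else 0)
            = ∏ p : ({p : Fin n × Fin n // p.1 < p.2}), (if ((∀ i, Es i p = true) ↔ E p = true) then (1:ℝ) else 0) := by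
          rw [Finset.prod_boole]
          simp
        rw [hind, Finset.prod_comm (f := fun i p => pairF m n P (cc i) p (Es i p)),
          mul_assoc, ← Finset.prod_mul_distrib]
        exact congrArg _ (Finset.prod_congr rfl fun p _ => mul_comm _ _)
    _ = ∑ cc : Fin k → (Fin n → Fin 1 → Fin m),
          (∏ i, ∏ u, l (cc i u 0)) *
            ∏ p : ({p : Fin n × Fin n // p.1 < p.2}),
              (if E p = true then ∏ i, P (cc i p.1.1 0) (cc i p.1.2 0)
               else 1 - ∏ i, P (cc i p.1.1 0) (cc i p.1.2 0)) := by
        refine Finset.sum_congr rfl fun cc _ => ?_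
        congr 1
        have hps := Finset.prod_univ_sum (fun _ : ({p : Fin n × Fin n // p.1 < p.2}) => (univ : Finset (Fin k → Bool)))
          (fun p β => (if ((∀ i, β i = true) ↔ E p = true) then (1:ℝ) else 0) *
            ∏ i, pairF m n P (cc i) p (β i))
        rw [Fintype.piFinset_univ] at hps
        calc
          (∑ Es : Fin k → (({p : Fin n × Fin n // p.1 < p.2}) → Bool),
              ∏ p : ({p : Fin n × Fin n // p.1 < p.2}),
                ((if ((∀ i, Es i p = true) ↔ E p = true) then (1:ℝ) else 0) *
                  ∏ i, pairF m n P (cc i) p (Es i p)))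
            = ∑ b : ({p : Fin n × Fin n // p.1 < p.2}) → (Fin k → Bool),
                ∏ p : ({p : Fin n × Fin n // p.1 < p.2}),
                  ((if ((∀ i, b p i = true) ↔ E p = true) then (1:ℝ) else 0) *
                    ∏ i, pairF m n P (cc i) p (b p i)) :=
              (Equiv.sum_comp (Equiv.piComm fun (p : ({p : Fin n × Fin n // p.1 < p.2})) (_ : Fin k) => Bool)
                (fun Es => ∏ p : ({p : Fin n × Fin n // p.1 < p.2}),
                  ((if ((∀ i, Es i p = true) ↔ E p = true) then (1:ℝ) else 0) *
                    ∏ i, pairF m n P (cc i) p (Es i p)))).symm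
          _ = ∏ p : ({p : Fin n × Fin n // p.1 < p.2}),
                ∑ β : Fin k → Bool,
                  ((if ((∀ i, β i = true) ↔ E p = true) then (1:ℝ) else 0) *
                    ∏ i, pairF m n P (cc i) p (β i)) := hps.symm
          _ = ∏ p : ({p : Fin n × Fin n // p.1 < p.2}),
                (if E p = true then ∏ i, P (cc i p.1.1 0) (cc i p.1.2 0)
                 else 1 - ∏ i, P (cc i p.1.1 0) (cc i p.1.2 0)) := by
              refine Finset.prod_congr rfl fun p _ => ?_
              exact key_sum k (fun i => P (cc i p.1.1 0) (cc i p.1.2 0)) (E p)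
    _ = mfngLaw m n k P l E := by
        unfold mfngLaw
        refine Fintype.sum_equiv
          (⟨fun c => fun i u _ => c u i, fun cc => fun u i => cc i u 0,
            fun c => rfl, fun cc => by
              funext i u r
              have : r = 0 := Subsingleton.elim r 0
              rw [this]⟩ :
            (Fin n → Fin k → Fin m) ≃ (Fin k → (Fin n → Fin 1 → Fin m))).symm
          _ _ fun cc => ?_
        simp only [Equiv.coe_fn_symm_mk]
        rw [Finset.prod_comm]
end

section
/- Let A be an event of the form A = {S ⊆ E_G} for a fixed set S of vertex pairs. If G is sampled from the depth-k MFNG measure W_k(P,ℓ) and H is sampled from the depth-1 measure W_1(P,ℓ) on the same vertex set, then P_{W_k}(S ⊆ E_G) = (P_{W_1}(S ⊆ E_H))^k. -/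
open Finset

/-- The probability, under the depth-`k` MFNG measure `W_k(P, l)` on `n`
nodes, that every vertex pair in `S` is an edge of the sampled graph:
averaging over the i.i.d. category assignments, each pair in `S` is
(conditionally independently) an edge with probability
`∏ r, P (c p.1 r) (c p.2 r)`. -/
noncomputable def probSubset (m n k : ℕ) (P : Fin m → Fin m → ℝ)
    (l : Fin m → ℝ) (S : Finset (Fin n × Fin n)) : ℝ :=
  ∑ c : Fin n → Fin k → Fin m,
    (∏ u, ∏ r, l (c u r)) * ∏ p ∈ S, ∏ r, P (c p.1 r) (c p.2 r)

lemma probSubset_eq_pow (m n k : ℕ) (P : Fin m → Fin m → ℝ)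
    (l : Fin m → ℝ) (S : Finset (Fin n × Fin n)) :
    probSubset m n k P l S =
      (∑ d : Fin n → Fin m, (∏ u, l (d u)) * ∏ p ∈ S, P (d p.1) (d p.2)) ^ k := by
  have h1 : (∑ d : Fin n → Fin m, (∏ u, l (d u)) * ∏ p ∈ S, P (d p.1) (d p.2)) ^ k
      = ∏ _r : Fin k,
        (∑ d : Fin n → Fin m, (∏ u, l (d u)) * ∏ p ∈ S, P (d p.1) (d p.2)) := by
    simp
  rw [h1, Finset.prod_univ_sum, Fintype.piFinset_univ]
  unfold probSubset
  rw [← Equiv.sum_comp (Equiv.piComm fun (_ : Fin k) (_ : Fin n) => Fin m)]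
  refine Finset.sum_congr rfl fun g _ => ?_
  have hc : ∀ (u : Fin n) (r : Fin k),
      (Equiv.piComm fun (_ : Fin k) (_ : Fin n) => Fin m) g u r = g r u := fun _ _ => rfl
  simp only [hc]
  rw [Finset.prod_comm]
  rw [show (∏ p ∈ S, ∏ r : Fin k, P (g r p.1) (g r p.2))
      = ∏ r : Fin k, ∏ p ∈ S, P (g r p.1) (g r p.2) from Finset.prod_comm]
  rw [← Finset.prod_mul_distrib]

/-- for any fixed set `S` of (unordered, distinct) vertex
pairs, the probability that `S ⊆ E_G` under the depth-`k` measure is the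
`k`-th power of the probability that `S ⊆ E_H` under the depth-1 measure. -/
theorem mfng_subset_prob_pow (m n k : ℕ)
    (P : Fin m → Fin m → ℝ)
    (hsymm : ∀ i j, P i j = P j i)
    (hP0 : ∀ i j, 0 ≤ P i j) (hP1 : ∀ i j, P i j ≤ 1)
    (l : Fin m → ℝ) (hl0 : ∀ i, 0 ≤ l i) (hl1 : ∑ i, l i = 1)
    (S : Finset (Fin n × Fin n)) (hS : ∀ p ∈ S, p.1 < p.2) :
    probSubset m n k P l S = (probSubset m n 1 P l S) ^ k := by
  rw [probSubset_eq_pow m n k P l S, probSubset_eq_pow m n 1 P l S, pow_one]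
end

section
/- For a graph on n nodes sampled from the depth-k MFNG measure W_k(P,ℓ), the probability that a fixed node u is simultaneously connected to d fixed other distinct nodes v_1,...,v_d equals (Σ_{i_1,...,i_{d+1} ∈ [m]} ∏_{j=2}^{d+1} p_{i_1 i_j} ∏_{j=1}^{d+1} ℓ_{i_j})^k. Consequently, the expected number of d-stars is n·C(n−1,d) times this quantity. -/
open Finset

/-- The single-level `d`-star survival probability
`∑_{i_1,…,i_{d+1}} ∏_{j=2}^{d+1} p_{i_1 i_j} ∏_{j=1}^{d+1} l_{i_j}`. -/
noncomputable def starSum (m d : ℕ) (P : Fin m → Fin m → ℝ)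
    (l : Fin m → ℝ) : ℝ :=
  ∑ c : Fin (d + 1) → Fin m,
    (∏ j : Fin d, P (c 0) (c j.succ)) * ∏ j, l (c j)

/-- Splitting a sum over all functions `Fin n → Fin m` along an injection:
the coordinates outside the range of the injection integrate out to `1`. -/
lemma split_sum {n m : ℕ} (l : Fin m → ℝ) (hl1 : ∑ i, l i = 1)
    {γ : Type*} [Fintype γ] [DecidableEq γ] (e : γ → Fin n)
    (he : Function.Injective e) (Q : (γ → Fin m) → ℝ) :
    ∑ g : Fin n → Fin m, (∏ w, l (g w)) * Q (g ∘ e)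
      = ∑ c : γ → Fin m, (∏ j, l (c j)) * Q c := by
  classical
  set B := {x : Fin n // x ∉ Set.range e} with hB
  let σ : γ ⊕ B ≃ Fin n :=
    (Equiv.sumCongr (Equiv.ofInjective e he) (Equiv.refl _)).trans
      (Equiv.sumCompl (· ∈ Set.range e))
  have hσ : ∀ j, σ (Sum.inl j) = e j := fun j => rfl
  have main := Fintype.sum_equiv
    ((Equiv.sumArrowEquivProdArrow γ B (Fin m)).symm.trans
      (σ.arrowCongr (Equiv.refl (Fin m))))
    (fun p : (γ → Fin m) × (B → Fin m) =>
      ((∏ j, l (p.1 j)) * Q p.1) * ∏ b, l (p.2 b))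
    (fun g : Fin n → Fin m => (∏ w, l (g w)) * Q (g ∘ e)) ?_
  · rw [← main, Fintype.sum_prod_type]
    refine Finset.sum_congr rfl fun c _ => ?_
    dsimp only
    rw [← Finset.mul_sum, ← Fintype.prod_sum fun (_ : B) i => l i]
    simp [hl1]
  · rintro ⟨c, h⟩
    have hg : ∀ x : γ ⊕ B,
        ((Equiv.sumArrowEquivProdArrow γ B (Fin m)).symm.trans
          (σ.arrowCongr (Equiv.refl (Fin m)))) (c, h) (σ x) = Sum.elim c h x := by
      intro x
      simp [Equiv.sumArrowEquivProdArrow, Equiv.arrowCongr]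
    have h1 : (∏ w, l ((((Equiv.sumArrowEquivProdArrow γ B (Fin m)).symm.trans
          (σ.arrowCongr (Equiv.refl (Fin m)))) (c, h)) w))
        = (∏ j, l (c j)) * ∏ b, l (h b) := by
      rw [← Equiv.prod_comp σ, Finset.prod_congr rfl fun x _ => by rw [hg x]]
      rw [Fintype.prod_sum_type]
      simp
    have h2 : (((Equiv.sumArrowEquivProdArrow γ B (Fin m)).symm.trans
          (σ.arrowCongr (Equiv.refl (Fin m)))) (c, h)) ∘ e = c := by
      funext j
      have := hg (Sum.inl j)
      rw [hσ j] at this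
      simpa using this
    dsimp only
    rw [h1, h2]; ring

/-- Single-level star probability equals `starSum`. -/
lemma level_sum {n m d : ℕ} (P : Fin m → Fin m → ℝ) (l : Fin m → ℝ)
    (hl1 : ∑ i, l i = 1) (u : Fin n) (v : Fin d → Fin n)
    (hv : Function.Injective v) (hvu : ∀ j, v j ≠ u) :
    ∑ g : Fin n → Fin m, (∏ w, l (g w)) * ∏ j : Fin d, P (g u) (g (v j))
      = starSum m d P l := by
  classical
  have he : Function.Injective (Fin.cons u v : Fin (d + 1) → Fin n) :=
    Fin.cons_injective_iff.2 ⟨by rintro ⟨j, rfl⟩; exact hvu j rfl, hv⟩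
  have key := split_sum l hl1 (Fin.cons u v) he
    (fun c : Fin (d + 1) → Fin m => ∏ j : Fin d, P (c 0) (c j.succ))
  simp only [Function.comp, Fin.cons_zero, Fin.cons_succ] at key
  rw [key, starSum]
  exact Finset.sum_congr rfl fun c _ => mul_comm _ _

/-- The depth-`k` star probability. -/
lemma star_prob (m n k d : ℕ) (P : Fin m → Fin m → ℝ) (l : Fin m → ℝ)
    (hl1 : ∑ i, l i = 1) (u : Fin n) (v : Fin d → Fin n)
    (hv : Function.Injective v) (hvu : ∀ j, v j ≠ u) :
    probSubset m n k P l (Finset.image (fun j => (u, v j)) univ)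
      = (starSum m d P l) ^ k := by
  classical
  have hinj : Function.Injective (fun j : Fin d => ((u, v j) : Fin n × Fin n)) := by
    intro a b hab
    exact hv (congrArg Prod.snd hab)
  have step1 : ∀ c : Fin n → Fin k → Fin m,
      (∏ w, ∏ r, l (c w r)) * ∏ p ∈ Finset.image (fun j => (u, v j)) univ,
          ∏ r, P (c p.1 r) (c p.2 r)
        = ∏ r : Fin k, ((∏ w, l (c w r)) * ∏ j : Fin d, P (c u r) (c (v j) r)) := by
    intro c
    have hA : (∏ w : Fin n, ∏ r : Fin k, l (c w r)) = ∏ r, ∏ w, l (c w r) :=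
      Finset.prod_comm
    have hB : (∏ j : Fin d, ∏ r : Fin k, P (c u r) (c (v j) r))
        = ∏ r, ∏ j, P (c u r) (c (v j) r) := Finset.prod_comm
    rw [Finset.prod_image (fun a _ b _ h => hinj h)]
    dsimp only
    rw [hA, hB, Finset.prod_mul_distrib]
  rw [probSubset, Finset.sum_congr rfl fun c _ => step1 c]
  rw [Fintype.sum_equiv (Equiv.piComm fun (_ : Fin n) (_ : Fin k) => Fin m)
    (fun c : Fin n → Fin k → Fin m =>
      ∏ r : Fin k, ((∏ w, l (c w r)) * ∏ j : Fin d, P (c u r) (c (v j) r)))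
    (fun p : Fin k → Fin n → Fin m =>
      ∏ r : Fin k, ((∏ w, l (p r w)) * ∏ j : Fin d, P (p r u) (p r (v j))))
    (fun c => rfl)]
  rw [← Fintype.sum_pow (fun g : Fin n → Fin m =>
      (∏ w, l (g w)) * ∏ j : Fin d, P (g u) (g (v j))) k]
  rw [level_sum P l hl1 u v hv hvu]

/-- the probability that a fixed node `u` is simultaneously
connected to `d` fixed other distinct nodes is `(starSum m d P l) ^ k`, and
the expected number of `d`-stars is `n * C(n-1, d)` times this quantity. -/
theorem mfng_star_prob_and_expected_stars (m n k d : ℕ)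
    (P : Fin m → Fin m → ℝ)
    (hsymm : ∀ i j, P i j = P j i)
    (hP0 : ∀ i j, 0 ≤ P i j) (hP1 : ∀ i j, P i j ≤ 1)
    (l : Fin m → ℝ) (hl0 : ∀ i, 0 ≤ l i) (hl1 : ∑ i, l i = 1) :
    (∀ (u : Fin n) (v : Fin d → Fin n), Function.Injective v →
        (∀ j, v j ≠ u) →
        probSubset m n k P l (Finset.image (fun j => (u, v j)) univ)
          = (starSum m d P l) ^ k) ∧
    (∑ u : Fin n, ∑ T ∈ (univ.erase u).powersetCard d,
        probSubset m n k P l (T.image fun t => (u, t))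
      = (n : ℝ) * ((n - 1).choose d : ℝ) * (starSum m d P l) ^ k) := by
  classical
  refine ⟨fun u v hv hvu => star_prob m n k d P l hl1 u v hv hvu, ?_⟩
  have hterm : ∀ u : Fin n, ∀ T ∈ (univ.erase u).powersetCard d,
      probSubset m n k P l (T.image fun t => (u, t)) = (starSum m d P l) ^ k := by
    intro u T hT
    rw [Finset.mem_powersetCard] at hT
    obtain ⟨hTsub, hTcard⟩ := hT
    set v : Fin d → Fin n := fun j => (T.orderIsoOfFin hTcard j : Fin n) with hvdef
    have hv : Function.Injective v := by
      intro a b hab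
      exact (T.orderIsoOfFin hTcard).injective (Subtype.ext hab)
    have hmem : ∀ j, v j ∈ T := fun j => (T.orderIsoOfFin hTcard j).2
    have hvu : ∀ j, v j ≠ u := fun j =>
      (Finset.mem_erase.1 (hTsub (hmem j))).1
    have himg : Finset.image v univ = T := by
      apply Finset.eq_of_subset_of_card_le
      · intro x hx
        obtain ⟨j, _, rfl⟩ := Finset.mem_image.1 hx
        exact hmem j
      · rw [Finset.card_image_of_injective _ hv, hTcard, Finset.card_univ,
          Fintype.card_fin]
    have : T.image (fun t => (u, t)) = Finset.image (fun j => (u, v j)) univ := by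
      rw [← himg, Finset.image_image]
      rfl
    rw [this]
    exact star_prob m n k d P l hl1 u v hv hvu
  calc ∑ u : Fin n, ∑ T ∈ (univ.erase u).powersetCard d,
        probSubset m n k P l (T.image fun t => (u, t))
      = ∑ u : Fin n, ∑ _T ∈ (univ.erase u).powersetCard d,
          (starSum m d P l) ^ k :=
        Finset.sum_congr rfl fun u _ => Finset.sum_congr rfl (hterm u)
    _ = ∑ u : Fin n, ((n - 1).choose d : ℝ) * (starSum m d P l) ^ k := by
        refine Finset.sum_congr rfl fun u _ => ?_
        rw [Finset.sum_const, Finset.card_powersetCard,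
          Finset.card_erase_of_mem (Finset.mem_univ u), Finset.card_univ,
          Fintype.card_fin, nsmul_eq_mul]
    _ = (n : ℝ) * ((n - 1).choose d : ℝ) * (starSum m d P l) ^ k := by
        rw [Finset.sum_const, Finset.card_univ, Fintype.card_fin, nsmul_eq_mul,
          mul_assoc]
end

section
/- For a graph on n nodes sampled from depth-k MFNG W_k(P,ℓ), the probability that three fixed distinct nodes form a triangle is (Σ_{i,j,t ∈ [m]} p_{ij} p_{it} p_{jt} ℓ_i ℓ_j ℓ_t)^k, and thus the expected number of triangles is C(n,3) times this quantity. -/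
open Finset

/-- Summing a product of per-coordinate factors over all functions factors
as a product of sums. -/
lemma sum_fn_prod {ι κ : Type*} [Fintype ι] [DecidableEq ι] [Fintype κ]
    (f : ι → κ → ℝ) :
    ∑ d : ι → κ, ∏ i, f i (d i) = ∏ i, ∑ j, f i j := by
  classical
  rw [Finset.prod_univ_sum, Fintype.piFinset_univ]

/-- The single-level triangle sum. -/
lemma tri_sum {m n : ℕ} (P : Fin m → Fin m → ℝ) (l : Fin m → ℝ) (hl1 : ∑ i, l i = 1)
    (u v w : Fin n) (huv : u ≠ v) (huw : u ≠ w) (hvw : v ≠ w) :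
    ∑ d : Fin n → Fin m,
        (∏ x, l (d x)) * (P (d u) (d v) * P (d u) (d w) * P (d v) (d w))
      = ∑ i, ∑ j, ∑ t, P i j * P i t * P j t * l i * l j * l t := by
  classical
  have key : ∀ i j t : Fin m, ∑ d : Fin n → Fin m,
      ((if d u = i then (1:ℝ) else 0) * (if d v = j then (1:ℝ) else 0) *
        (if d w = t then (1:ℝ) else 0) * ∏ x, l (d x)) = l i * l j * l t := by
    intro i j t
    have hrw : ∀ d : Fin n → Fin m,
        (if d u = i then (1:ℝ) else 0) * (if d v = j then (1:ℝ) else 0) *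
          (if d w = t then (1:ℝ) else 0) * ∏ x, l (d x)
        = ∏ x, ((if x = u then (if d x = i then (1:ℝ) else 0) else 1) *
            (if x = v then (if d x = j then (1:ℝ) else 0) else 1) *
            (if x = w then (if d x = t then (1:ℝ) else 0) else 1) * l (d x)) := by
      intro d
      rw [Finset.prod_mul_distrib, Finset.prod_mul_distrib, Finset.prod_mul_distrib,
        Finset.prod_ite_eq', Finset.prod_ite_eq', Finset.prod_ite_eq']
      simp
    rw [Finset.sum_congr rfl fun d _ => hrw d]
    rw [sum_fn_prod (fun x c => (if x = u then (if c = i then (1:ℝ) else 0) else 1) *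
        (if x = v then (if c = j then (1:ℝ) else 0) else 1) *
        (if x = w then (if c = t then (1:ℝ) else 0) else 1) * l c)]
    have hx : ∀ x : Fin n, (∑ c : Fin m, ((if x = u then (if c = i then (1:ℝ) else 0) else 1) *
        (if x = v then (if c = j then (1:ℝ) else 0) else 1) *
        (if x = w then (if c = t then (1:ℝ) else 0) else 1) * l c))
        = (if x = u then l i else 1) * (if x = v then l j else 1) *
            (if x = w then l t else 1) := by
      intro x
      by_cases hxu : x = u
      · subst hxu
        simp [huv, huw, ite_mul, one_mul, zero_mul, Finset.sum_ite_eq']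
      · by_cases hxv : x = v
        · subst hxv
          simp [hxu, hvw, ite_mul, one_mul, zero_mul, Finset.sum_ite_eq']
        · by_cases hxw : x = w
          · subst hxw
            simp [hxu, hxv, ite_mul, one_mul, zero_mul, Finset.sum_ite_eq']
          · simp [hxu, hxv, hxw, hl1]
    rw [Finset.prod_congr rfl fun x _ => hx x]
    rw [Finset.prod_mul_distrib, Finset.prod_mul_distrib,
      Finset.prod_ite_eq', Finset.prod_ite_eq', Finset.prod_ite_eq']
    simp
  have expand : ∀ d : Fin n → Fin m,
      (∏ x, l (d x)) * (P (d u) (d v) * P (d u) (d w) * P (d v) (d w))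
      = ∑ i, ∑ j, ∑ t, P i j * P i t * P j t *
          ((if d u = i then (1:ℝ) else 0) * (if d v = j then (1:ℝ) else 0) *
            (if d w = t then (1:ℝ) else 0) * ∏ x, l (d x)) := by
    intro d
    simp only [mul_ite, ite_mul, mul_zero, zero_mul, mul_one, one_mul,
      Finset.sum_ite_eq, Finset.mem_univ, if_true]
    ring
  rw [Finset.sum_congr rfl fun d _ => expand d]
  rw [Finset.sum_comm]
  refine Finset.sum_congr rfl fun i _ => ?_
  rw [Finset.sum_comm]
  refine Finset.sum_congr rfl fun j _ => ?_
  rw [Finset.sum_comm]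
  refine Finset.sum_congr rfl fun t _ => ?_
  rw [← Finset.mul_sum, key i j t]
  ring

/-- The triangle probability for three fixed distinct nodes. -/
lemma tri_prob (m n k : ℕ) (P : Fin m → Fin m → ℝ) (l : Fin m → ℝ)
    (hl1 : ∑ i, l i = 1) (u v w : Fin n) (huv : u ≠ v) (huw : u ≠ w) (hvw : v ≠ w) :
    probSubset m n k P l {(u, v), (u, w), (v, w)}
      = (∑ i, ∑ j, ∑ t, P i j * P i t * P j t * l i * l j * l t) ^ k := by
  classical
  unfold probSubset
  set H : (Fin n → Fin m) → ℝ := fun d =>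
    (∏ x, l (d x)) * (P (d u) (d v) * P (d u) (d w) * P (d v) (d w)) with hH
  have hc : ∀ c : Fin n → Fin k → Fin m,
      (∏ x, ∏ r, l (c x r)) *
        ∏ p ∈ ({(u, v), (u, w), (v, w)} : Finset (Fin n × Fin n)),
          ∏ r, P (c p.1 r) (c p.2 r)
      = ∏ r : Fin k, H (fun x => c x r) := by
    intro c
    have hm1 : ((u, v) : Fin n × Fin n) ∉ ({(u, w), (v, w)} : Finset (Fin n × Fin n)) := by
      simp [Prod.ext_iff, hvw, huv]
    have hm2 : ((u, w) : Fin n × Fin n) ∉ ({(v, w)} : Finset (Fin n × Fin n)) := by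
      simp [Prod.ext_iff, huv]
    rw [Finset.prod_insert hm1, Finset.prod_insert hm2, Finset.prod_singleton]
    simp only [hH, Finset.prod_mul_distrib]
    rw [Finset.prod_comm]
    ring
  rw [Finset.sum_congr rfl fun c _ => hc c]
  rw [show (∑ c : Fin n → Fin k → Fin m, ∏ r : Fin k, H fun x => c x r)
      = ∑ c' : Fin k → Fin n → Fin m, ∏ r : Fin k, H (c' r) from
    Fintype.sum_equiv (Equiv.piComm fun (_ : Fin n) (_ : Fin k) => Fin m)
      _ _ (fun c => rfl)]
  rw [sum_fn_prod (fun (_ : Fin k) d => H d)]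
  rw [Finset.prod_const, Finset.card_univ, Fintype.card_fin,
    tri_sum P l hl1 u v w huv huw hvw]

lemma filt {n : ℕ} (u v w : Fin n) (h1 : u < v) (h2 : v < w) :
    ((({u, v, w} : Finset (Fin n)) ×ˢ {u, v, w}).filter fun p => p.1 < p.2)
      = {(u, v), (u, w), (v, w)} := by
  ext ⟨x, y⟩
  simp only [Finset.mem_filter, Finset.mem_product, Finset.mem_insert, Finset.mem_singleton,
    Prod.mk.injEq]
  constructor
  · rintro ⟨⟨rfl | rfl | rfl, rfl | rfl | rfl⟩, hlt⟩ <;>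
      first
        | exact absurd hlt (lt_irrefl _)
        | exact absurd hlt (not_lt_of_gt h1)
        | exact absurd hlt (not_lt_of_gt h2)
        | exact absurd hlt (not_lt_of_gt (h1.trans h2))
        | tauto
  · rintro (⟨rfl, rfl⟩ | ⟨rfl, rfl⟩ | ⟨rfl, rfl⟩) <;>
      exact ⟨by tauto, by first | exact h1 | exact h2 | exact h1.trans h2⟩

lemma sorted3 {n : ℕ} (T : Finset (Fin n)) (hT : T.card = 3) :
    ∃ u v w : Fin n, u < v ∧ v < w ∧ T = {u, v, w} := by
  obtain ⟨a, b, c, hab, hac, hbc, rfl⟩ := Finset.card_eq_three.mp hT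
  rcases lt_trichotomy a b with h1 | h1 | h1
  · rcases lt_trichotomy b c with h2 | h2 | h2
    · exact ⟨a, b, c, h1, h2, rfl⟩
    · exact absurd h2 hbc
    · rcases lt_trichotomy a c with h3 | h3 | h3
      · exact ⟨a, c, b, h3, h2, by ext x; simp; tauto⟩
      · exact absurd h3 hac
      · exact ⟨c, a, b, h3, h1, by ext x; simp; tauto⟩
  · exact absurd h1 hab
  · rcases lt_trichotomy a c with h2 | h2 | h2
    · exact ⟨b, a, c, h1, h2, by ext x; simp; tauto⟩
    · exact absurd h2 hac
    · rcases lt_trichotomy b c with h3 | h3 | h3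
      · exact ⟨b, c, a, h3, h2, by ext x; simp; tauto⟩
      · exact absurd h3 hbc
      · exact ⟨c, b, a, h3, h1, by ext x; simp; tauto⟩

/-- three fixed distinct nodes form a triangle with
probability `(∑ i j t, p_{ij} p_{it} p_{jt} l_i l_j l_t) ^ k`, and the
expected number of triangles is `C(n,3)` times this quantity. -/
theorem mfng_triangle_prob_and_expected_triangles (m n k : ℕ)
    (P : Fin m → Fin m → ℝ)
    (hsymm : ∀ i j, P i j = P j i)
    (hP0 : ∀ i j, 0 ≤ P i j) (hP1 : ∀ i j, P i j ≤ 1)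
    (l : Fin m → ℝ) (hl0 : ∀ i, 0 ≤ l i) (hl1 : ∑ i, l i = 1) :
    (∀ u v w : Fin n, u ≠ v → u ≠ w → v ≠ w →
        probSubset m n k P l {(u, v), (u, w), (v, w)}
          = (∑ i, ∑ j, ∑ t, P i j * P i t * P j t * l i * l j * l t) ^ k) ∧
    (∑ T ∈ (univ : Finset (Fin n)).powersetCard 3,
        probSubset m n k P l ((T ×ˢ T).filter fun p => p.1 < p.2)
      = (n.choose 3 : ℝ) *
          (∑ i, ∑ j, ∑ t, P i j * P i t * P j t * l i * l j * l t) ^ k) := by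
  classical
  refine ⟨fun u v w huv huw hvw => tri_prob m n k P l hl1 u v w huv huw hvw, ?_⟩
  have hconst : ∀ T ∈ (univ : Finset (Fin n)).powersetCard 3,
      probSubset m n k P l ((T ×ˢ T).filter fun p => p.1 < p.2)
        = (∑ i, ∑ j, ∑ t, P i j * P i t * P j t * l i * l j * l t) ^ k := by
    intro T hT
    have hcard : T.card = 3 := (Finset.mem_powersetCard.mp hT).2
    obtain ⟨u, v, w, h1, h2, rfl⟩ := sorted3 T hcard
    rw [filt u v w h1 h2]
    exact tri_prob m n k P l hl1 u v w h1.ne (h1.trans h2).ne h2.ne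
  rw [Finset.sum_congr rfl hconst, Finset.sum_const, Finset.card_powersetCard,
    Finset.card_univ, Fintype.card_fin, nsmul_eq_mul]
end

section
/- For a graph on n nodes sampled from depth-k MFNG W_k(P,ℓ), the probability that t fixed distinct nodes form a t-clique equals s_t^k where s_t = Σ_{i_1,...,i_t ∈ [m]} (∏_{1 ≤ j < q ≤ t} p_{i_j i_q}) ℓ_{i_1}⋯ℓ_{i_t}. Hence the expected number of t-cliques is C(n,t)·s_t^k. -/
open Finset

/-- The single-level `t`-clique survival probability
`s_t = ∑_{i_1,…,i_t} (∏_{j<q} p_{i_j i_q}) l_{i_1} ⋯ l_{i_t}`. -/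
noncomputable def cliqueSum (m t : ℕ) (P : Fin m → Fin m → ℝ)
    (l : Fin m → ℝ) : ℝ :=
  ∑ c : Fin t → Fin m,
    (∏ p ∈ univ.filter (fun p : Fin t × Fin t => p.1 < p.2),
        P (c p.1) (c p.2)) * ∏ j, l (c j)

/-- Marginalization: the depth-`1` probability for pairs supported on `t`
distinct vertices equals the clique sum. -/
lemma marginal_cliqueSum (m n t : ℕ) (P : Fin m → Fin m → ℝ) (l : Fin m → ℝ)
    (hl1 : ∑ i, l i = 1) (f : Fin t → Fin n) (hf : Function.Injective f) :
    ∑ d : Fin n → Fin m, (∏ u, l (d u)) *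
      ∏ p ∈ univ.filter (fun p : Fin t × Fin t => p.1 < p.2),
        P (d (f p.1)) (d (f p.2)) = cliqueSum m t P l := by
  classical
  set pr : Fin n → Prop := fun u => ∃ j, f j = u with hpr
  rw [← Equiv.sum_comp (Equiv.piEquivPiSubtypeProd pr (fun _ => Fin m)).symm]
  rw [Fintype.sum_prod_type]
  have hd : ∀ (g : {x // pr x} → Fin m) (h : {x // ¬ pr x} → Fin m) (u : Fin n),
      (Equiv.piEquivPiSubtypeProd pr (fun _ => Fin m)).symm (g, h) u
      = if hu : pr u then g ⟨u, hu⟩ else h ⟨u, hu⟩ := fun g h u => rfl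
  have key : ∀ (g : {x // pr x} → Fin m) (h : {x // ¬ pr x} → Fin m),
      (∏ u, l ((Equiv.piEquivPiSubtypeProd pr (fun _ => Fin m)).symm (g, h) u)) *
      ∏ p ∈ univ.filter (fun p : Fin t × Fin t => p.1 < p.2),
        P ((Equiv.piEquivPiSubtypeProd pr (fun _ => Fin m)).symm (g, h) (f p.1))
          ((Equiv.piEquivPiSubtypeProd pr (fun _ => Fin m)).symm (g, h) (f p.2))
      = ((∏ u : {x // pr x}, l (g u)) *
          ∏ p ∈ univ.filter (fun p : Fin t × Fin t => p.1 < p.2),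
            P (g ⟨f p.1, ⟨p.1, rfl⟩⟩) (g ⟨f p.2, ⟨p.2, rfl⟩⟩)) *
        ∏ u : {x // ¬ pr x}, l (h u) := by
    intro g h
    have h2 : (∏ u, l ((Equiv.piEquivPiSubtypeProd pr (fun _ => Fin m)).symm (g, h) u))
        = (∏ u : {x // pr x}, l (g u)) * ∏ u : {x // ¬ pr x}, l (h u) := by
      rw [← Fintype.prod_subtype_mul_prod_subtype pr
        (fun u => l ((Equiv.piEquivPiSubtypeProd pr (fun _ => Fin m)).symm (g, h) u))]
      congr 1
      · exact Finset.prod_congr rfl fun u _ => by rw [hd, dif_pos u.2]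
      · exact Finset.prod_congr rfl fun u _ => by rw [hd, dif_neg u.2]
    have h3 : (∏ p ∈ univ.filter (fun p : Fin t × Fin t => p.1 < p.2),
        P ((Equiv.piEquivPiSubtypeProd pr (fun _ => Fin m)).symm (g, h) (f p.1))
          ((Equiv.piEquivPiSubtypeProd pr (fun _ => Fin m)).symm (g, h) (f p.2)))
        = ∏ p ∈ univ.filter (fun p : Fin t × Fin t => p.1 < p.2),
            P (g ⟨f p.1, ⟨p.1, rfl⟩⟩) (g ⟨f p.2, ⟨p.2, rfl⟩⟩) :=
      Finset.prod_congr rfl fun p _ => by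
        rw [hd, hd, dif_pos (⟨p.1, rfl⟩ : pr (f p.1)), dif_pos (⟨p.2, rfl⟩ : pr (f p.2))]
    rw [h2, h3]; ring
  calc (∑ g : {x // pr x} → Fin m, ∑ h : {x // ¬ pr x} → Fin m,
        (∏ u, l ((Equiv.piEquivPiSubtypeProd pr (fun _ => Fin m)).symm (g, h) u)) *
        ∏ p ∈ univ.filter (fun p : Fin t × Fin t => p.1 < p.2),
          P ((Equiv.piEquivPiSubtypeProd pr (fun _ => Fin m)).symm (g, h) (f p.1))
            ((Equiv.piEquivPiSubtypeProd pr (fun _ => Fin m)).symm (g, h) (f p.2)))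
      = (∑ g : {x // pr x} → Fin m,
          (∏ u : {x // pr x}, l (g u)) *
          ∏ p ∈ univ.filter (fun p : Fin t × Fin t => p.1 < p.2),
            P (g ⟨f p.1, ⟨p.1, rfl⟩⟩) (g ⟨f p.2, ⟨p.2, rfl⟩⟩)) *
        ∑ h : {x // ¬ pr x} → Fin m, ∏ u : {x // ¬ pr x}, l (h u) := by
        rw [Finset.sum_mul_sum]
        exact Finset.sum_congr rfl fun g _ => Finset.sum_congr rfl fun h _ => key g h
    _ = ∑ g : {x // pr x} → Fin m,
          (∏ u : {x // pr x}, l (g u)) *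
          ∏ p ∈ univ.filter (fun p : Fin t × Fin t => p.1 < p.2),
            P (g ⟨f p.1, ⟨p.1, rfl⟩⟩) (g ⟨f p.2, ⟨p.2, rfl⟩⟩) := by
        have hh : (∑ h : {x // ¬ pr x} → Fin m, ∏ u : {x // ¬ pr x}, l (h u)) = 1 := by
          rw [← Fintype.piFinset_univ, ← Finset.prod_univ_sum]
          simp [hl1]
        rw [hh, mul_one]
    _ = cliqueSum m t P l := by
        have hfi : Function.Injective (fun j : Fin t => (⟨f j, ⟨j, rfl⟩⟩ : {x // pr x})) := by
          intro a b hab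
          exact hf (congrArg Subtype.val hab)
        have hfs : Function.Surjective (fun j : Fin t => (⟨f j, ⟨j, rfl⟩⟩ : {x // pr x})) := by
          rintro ⟨u, j, rfl⟩
          exact ⟨j, rfl⟩
        let σ : Fin t ≃ {x // pr x} :=
          Equiv.ofBijective (fun j : Fin t => (⟨f j, ⟨j, rfl⟩⟩ : {x // pr x})) ⟨hfi, hfs⟩
        let e : (Fin t → Fin m) ≃ ({x // pr x} → Fin m) :=
          Equiv.arrowCongr σ (Equiv.refl (Fin m))
        rw [← Equiv.sum_comp e]
        unfold cliqueSum
        refine Finset.sum_congr rfl fun c _ => ?_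
        rw [mul_comm]
        congr 1
        · refine Finset.prod_congr rfl fun p _ => ?_
          show P (c (σ.symm ⟨f p.1, ⟨p.1, rfl⟩⟩)) (c (σ.symm ⟨f p.2, ⟨p.2, rfl⟩⟩)) = _
          rw [show (⟨f p.1, ⟨p.1, rfl⟩⟩ : {x // pr x}) = σ p.1 from rfl,
            show (⟨f p.2, ⟨p.2, rfl⟩⟩ : {x // pr x}) = σ p.2 from rfl,
            σ.symm_apply_apply, σ.symm_apply_apply]
        · rw [← Equiv.prod_comp σ.symm (fun j => l (c j))]
          rfl

/-- The clique probability for `t` distinct vertices. -/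
lemma clique_prob (m n k t : ℕ) (P : Fin m → Fin m → ℝ) (l : Fin m → ℝ)
    (hl1 : ∑ i, l i = 1) (f : Fin t → Fin n) (hf : Function.Injective f) :
    probSubset m n k P l
      (Finset.image (fun p => (f p.1, f p.2))
        (univ.filter fun p : Fin t × Fin t => p.1 < p.2))
      = (cliqueSum m t P l) ^ k := by
  classical
  rw [probSubset_eq_pow]
  have hinj : ∀ p ∈ univ.filter (fun p : Fin t × Fin t => p.1 < p.2),
      ∀ q ∈ univ.filter (fun p : Fin t × Fin t => p.1 < p.2),
      (fun p : Fin t × Fin t => (f p.1, f p.2)) p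
        = (fun p : Fin t × Fin t => (f p.1, f p.2)) q → p = q := by
    intro p _ q _ hpq
    have h1 := congrArg Prod.fst hpq
    have h2 := congrArg Prod.snd hpq
    exact Prod.ext (hf h1) (hf h2)
  have : ∀ d : Fin n → Fin m,
      (∏ p ∈ Finset.image (fun p => (f p.1, f p.2))
          (univ.filter fun p : Fin t × Fin t => p.1 < p.2), P (d p.1) (d p.2))
      = ∏ p ∈ univ.filter (fun p : Fin t × Fin t => p.1 < p.2),
          P (d (f p.1)) (d (f p.2)) := fun d => Finset.prod_image hinj
  rw [← marginal_cliqueSum m n t P l hl1 f hf]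
  congr 1
  exact Finset.sum_congr rfl fun d _ => by rw [this d]

/-- `t` fixed distinct nodes form a `t`-clique with
probability `s_t ^ k`, and the expected number of `t`-cliques is
`C(n,t) * s_t ^ k`. -/
theorem mfng_clique_prob_and_expected_cliques (m n k t : ℕ)
    (P : Fin m → Fin m → ℝ)
    (hsymm : ∀ i j, P i j = P j i)
    (hP0 : ∀ i j, 0 ≤ P i j) (hP1 : ∀ i j, P i j ≤ 1)
    (l : Fin m → ℝ) (hl0 : ∀ i, 0 ≤ l i) (hl1 : ∑ i, l i = 1) :
    (∀ f : Fin t → Fin n, Function.Injective f →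
        probSubset m n k P l
          (Finset.image (fun p => (f p.1, f p.2))
            (univ.filter fun p : Fin t × Fin t => p.1 < p.2))
          = (cliqueSum m t P l) ^ k) ∧
    (∑ T ∈ (univ : Finset (Fin n)).powersetCard t,
        probSubset m n k P l ((T ×ˢ T).filter fun p => p.1 < p.2)
      = (n.choose t : ℝ) * (cliqueSum m t P l) ^ k) := by
  classical
  constructor
  · exact fun f hf => clique_prob m n k t P l hl1 f hf
  · have hconst : ∀ T ∈ (univ : Finset (Fin n)).powersetCard t,
        probSubset m n k P l ((T ×ˢ T).filter fun p => p.1 < p.2)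
        = (cliqueSum m t P l) ^ k := by
      intro T hT
      rw [Finset.mem_powersetCard] at hT
      obtain ⟨-, hcard⟩ := hT
      set g : Fin t → Fin n := fun j => T.orderEmbOfFin hcard j with hg
      have hgmono : StrictMono g := (T.orderEmbOfFin hcard).strictMono
      have hginj : Function.Injective g := hgmono.injective
      have hmem : ∀ x, x ∈ T ↔ ∃ a, g a = x := by
        intro x
        constructor
        · intro hx
          have : x ∈ Set.range (T.orderEmbOfFin hcard) := by
            rw [Finset.range_orderEmbOfFin]; exact hx
          exact this
        · rintro ⟨a, rfl⟩
          exact Finset.orderEmbOfFin_mem T hcard a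
      have hset : ((T ×ˢ T).filter fun p => p.1 < p.2)
          = Finset.image (fun p => (g p.1, g p.2))
              (univ.filter fun p : Fin t × Fin t => p.1 < p.2) := by
        ext ⟨x, y⟩
        simp only [Finset.mem_filter, Finset.mem_product, Finset.mem_image,
          Finset.mem_univ, true_and, Prod.ext_iff]
        constructor
        · rintro ⟨⟨hx, hy⟩, hxy⟩
          obtain ⟨a, rfl⟩ := (hmem x).1 hx
          obtain ⟨b, rfl⟩ := (hmem y).1 hy
          exact ⟨(a, b), hgmono.lt_iff_lt.1 hxy, rfl, rfl⟩
        · rintro ⟨⟨a, b⟩, hab, rfl, rfl⟩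
          exact ⟨⟨(hmem _).2 ⟨a, rfl⟩, (hmem _).2 ⟨b, rfl⟩⟩, hgmono hab⟩
      rw [hset]
      exact clique_prob m n k t P l hl1 g hginj
    rw [Finset.sum_congr rfl hconst, Finset.sum_const, Finset.card_powersetCard,
      Finset.card_univ, Fintype.card_fin, nsmul_eq_mul]
end

section
/- Let s = Σ_{i,j} p_{ij} ℓ_i ℓ_j and let s_2 = Σ_{i,j,t} p_{ij} p_{it} ℓ_i ℓ_j ℓ_t. For a depth-k MFNG graph on n nodes, the variance of the number of edges |E| equals C(n,2)s^k(1 − C(n,2)s^k) + 2·n·C(n−1,2)·s_2^k + C(n,2)·C(n−2,2)·s^{2k}. -/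
open Finset

/-- Number of edges of the configuration `E`. -/
def numEdges (n : ℕ) (E : {p : Fin n × Fin n // p.1 < p.2} → Bool) : ℕ :=
  (univ.filter fun p => E p = true).card


/-! ### Auxiliary lemmas -/

lemma aux_sum_fun_bool {ι : Type*} [Fintype ι] [DecidableEq ι] (h : ι → Bool → ℝ) :
    ∑ E : ι → Bool, ∏ i, h i (E i) = ∏ i, (h i true + h i false) := by
  rw [← Fintype.prod_sum (κ := fun _ : ι => Bool) h]
  refine Finset.prod_congr rfl fun i _ => ?_
  simp [Fintype.sum_bool]

lemma aux_bern {ι : Type*} [Fintype ι] [DecidableEq ι] (q : ι → ℝ) (S : Finset ι) :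
    ∑ E : ι → Bool, (∏ i, if E i then q i else 1 - q i) * ∏ i ∈ S, (if E i then (1:ℝ) else 0)
      = ∏ i ∈ S, q i := by
  have h1 : ∀ E : ι → Bool, (∏ i, if E i then q i else 1 - q i) * ∏ i ∈ S, (if E i then (1:ℝ) else 0)
      = ∏ i, ((if E i then q i else 1 - q i) * (if i ∈ S then (if E i then (1:ℝ) else 0) else 1)) := by
    intro E
    rw [Finset.prod_mul_distrib, Finset.prod_ite_mem, Finset.univ_inter]
  simp_rw [h1]
  rw [aux_sum_fun_bool (fun i x => (if x then q i else 1 - q i) * (if i ∈ S then (if x then (1:ℝ) else 0) else 1))]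
  rw [show ∏ i ∈ S, q i = ∏ i, (if i ∈ S then q i else 1) by rw [Finset.prod_ite_mem, Finset.univ_inter]]
  refine Finset.prod_congr rfl fun i _ => ?_
  by_cases hi : i ∈ S <;> simp [hi]

lemma aux_level (m n k : ℕ) (l : Fin m → ℝ) (G : (Fin n → Fin m) → ℝ) :
    ∑ c : Fin n → Fin k → Fin m, (∏ u, ∏ r, l (c u r)) * ∏ r, G (fun u => c u r)
      = (∑ d : Fin n → Fin m, (∏ u, l (d u)) * G d) ^ k := by
  have hbij : Function.Bijective
      (Function.swap : (Fin k → Fin n → Fin m) → (Fin n → Fin k → Fin m)) :=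
    Function.bijective_iff_has_inverse.mpr ⟨Function.swap, fun _ => rfl, fun _ => rfl⟩
  rw [← Function.Bijective.sum_comp hbij
      (fun c => (∏ u, ∏ r, l (c u r)) * ∏ r, G (fun u => c u r))]
  have h1 : ∀ c' : Fin k → Fin n → Fin m,
      (∏ u, ∏ r, l (Function.swap c' u r)) * ∏ r, G (fun u => Function.swap c' u r)
        = ∏ r, ((∏ u, l (c' r u)) * G (c' r)) := by
    intro c'
    rw [Finset.prod_mul_distrib, Finset.prod_comm]
  simp_rw [h1]
  rw [← Fintype.prod_sum (κ := fun _ : Fin k => (Fin n → Fin m))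
      (fun _ d => (∏ u, l (d u)) * G d)]
  rw [Finset.prod_const, Finset.card_univ, Fintype.card_fin]

lemma aux_pinned (m n : ℕ) (l : Fin m → ℝ) (hl1 : ∑ i, l i = 1)
    (S : Finset (Fin n)) (v : Fin n → Fin m) :
    ∑ d : Fin n → Fin m,
        ∏ u, (l (d u) * (if u ∈ S then (if d u = v u then (1:ℝ) else 0) else 1))
      = ∏ u ∈ S, l (v u) := by
  rw [← Fintype.prod_sum (κ := fun _ : Fin n => Fin m)
      (fun u x => l x * (if u ∈ S then (if x = v u then (1:ℝ) else 0) else 1))]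
  rw [show ∏ u ∈ S, l (v u) = ∏ u, (if u ∈ S then l (v u) else 1) by
    rw [Finset.prod_ite_mem, Finset.univ_inter]]
  refine Finset.prod_congr rfl fun u _ => ?_
  by_cases hu : u ∈ S
  · simp [hu, mul_ite, Finset.sum_ite_eq']
  · simp [hu, hl1]

lemma aux_pinned' (m n : ℕ) (l : Fin m → ℝ) (hl1 : ∑ i, l i = 1)
    (S : Finset (Fin n)) (v : Fin n → Fin m) :
    ∑ d : Fin n → Fin m,
        (∏ u, l (d u)) * (∏ u ∈ S, (if d u = v u then (1:ℝ) else 0))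
      = ∏ u ∈ S, l (v u) := by
  have h : ∀ d : Fin n → Fin m,
      (∏ u, l (d u)) * (∏ u ∈ S, (if d u = v u then (1:ℝ) else 0))
      = ∏ u, (l (d u) * (if u ∈ S then (if d u = v u then (1:ℝ) else 0) else 1)) := by
    intro d
    rw [Finset.prod_mul_distrib, Finset.prod_ite_mem, Finset.univ_inter]
  simp_rw [h]
  exact aux_pinned m n l hl1 S v

lemma aux_edge (m n : ℕ) (P : Fin m → Fin m → ℝ) (l : Fin m → ℝ) (hl1 : ∑ i, l i = 1)
    {a b : Fin n} (hab : a ≠ b) :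
    ∑ d : Fin n → Fin m, (∏ u, l (d u)) * P (d a) (d b)
      = ∑ i, ∑ j, P i j * l i * l j := by
  have key : ∀ d : Fin n → Fin m, P (d a) (d b)
      = ∑ w : Fin m × Fin m,
          ((if d a = w.1 then (1:ℝ) else 0) * (if d b = w.2 then (1:ℝ) else 0)) * P w.1 w.2 := by
    intro d
    rw [Fintype.sum_prod_type]
    simp [ite_mul, Finset.sum_ite_eq']
  simp_rw [key, Finset.mul_sum]
  rw [Finset.sum_comm]
  have main : ∀ w : Fin m × Fin m,
      ∑ d : Fin n → Fin m,
        (∏ u, l (d u)) * (((if d a = w.1 then (1:ℝ) else 0) * (if d b = w.2 then 1 else 0)) * P w.1 w.2)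
      = P w.1 w.2 * (l w.1 * l w.2) := by
    intro w
    set v : Fin n → Fin m := fun u => if u = a then w.1 else w.2 with hv
    have h2 : ∀ d : Fin n → Fin m,
        (∏ u, l (d u)) * (((if d a = w.1 then (1:ℝ) else 0) * (if d b = w.2 then 1 else 0)) * P w.1 w.2)
        = ((∏ u, l (d u)) * (∏ u ∈ ({a, b} : Finset (Fin n)), (if d u = v u then (1:ℝ) else 0))) * P w.1 w.2 := by
      intro d
      rw [Finset.prod_pair hab]
      have h3 : v a = w.1 := by simp [hv]
      have h4 : v b = w.2 := by simp [hv, (Ne.symm hab)]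
      rw [h3, h4]; ring
    simp_rw [h2]
    rw [← Finset.sum_mul, aux_pinned' m n l hl1 ({a, b} : Finset (Fin n)) v, Finset.prod_pair hab]
    have h3 : v a = w.1 := by simp [hv]
    have h4 : v b = w.2 := by simp [hv, (Ne.symm hab)]
    rw [h3, h4]; ring
  simp_rw [main]
  rw [Fintype.sum_prod_type]
  refine Finset.sum_congr rfl fun i _ => Finset.sum_congr rfl fun j _ => by ring

lemma aux_wedge (m n : ℕ) (P : Fin m → Fin m → ℝ) (l : Fin m → ℝ) (hl1 : ∑ i, l i = 1)
    {x y z : Fin n} (hxy : x ≠ y) (hxz : x ≠ z) (hyz : y ≠ z) :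
    ∑ d : Fin n → Fin m, (∏ u, l (d u)) * (P (d x) (d y) * P (d x) (d z))
      = ∑ i, ∑ j, ∑ t, P i j * P i t * l i * l j * l t := by
  have key : ∀ d : Fin n → Fin m, P (d x) (d y) * P (d x) (d z)
      = ∑ w : Fin m × Fin m × Fin m,
          (∏ u ∈ ({x, y, z} : Finset (Fin n)),
            (if d u = (if u = x then w.1 else if u = y then w.2.1 else w.2.2) then (1:ℝ) else 0))
            * (P w.1 w.2.1 * P w.1 w.2.2) := by
    intro d
    have hS : ∀ w : Fin m × Fin m × Fin m,
        (∏ u ∈ ({x, y, z} : Finset (Fin n)),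
          (if d u = (if u = x then w.1 else if u = y then w.2.1 else w.2.2) then (1:ℝ) else 0))
        = (if d x = w.1 then (1:ℝ) else 0) * ((if d y = w.2.1 then (1:ℝ) else 0) * (if d z = w.2.2 then (1:ℝ) else 0)) := by
      intro w
      rw [Finset.prod_insert (by simp [hxy, hxz]), Finset.prod_insert (by simp [hyz]),
        Finset.prod_singleton]
      simp [hxy, hxz, hyz, Ne.symm hxy, Ne.symm hxz, Ne.symm hyz]
    simp_rw [hS]
    rw [Fintype.sum_prod_type]
    simp_rw [Fintype.sum_prod_type]
    simp [ite_mul, Finset.sum_ite_eq']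
  simp_rw [key, Finset.mul_sum]
  rw [Finset.sum_comm]
  have main : ∀ w : Fin m × Fin m × Fin m,
      ∑ d : Fin n → Fin m,
        (∏ u, l (d u)) *
          ((∏ u ∈ ({x, y, z} : Finset (Fin n)),
            (if d u = (if u = x then w.1 else if u = y then w.2.1 else w.2.2) then (1:ℝ) else 0))
            * (P w.1 w.2.1 * P w.1 w.2.2))
      = (P w.1 w.2.1 * P w.1 w.2.2) * (l w.1 * (l w.2.1 * l w.2.2)) := by
    intro w
    have h2 : ∀ d : Fin n → Fin m,
        (∏ u, l (d u)) *
          ((∏ u ∈ ({x, y, z} : Finset (Fin n)),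
            (if d u = (if u = x then w.1 else if u = y then w.2.1 else w.2.2) then (1:ℝ) else 0))
            * (P w.1 w.2.1 * P w.1 w.2.2))
        = ((∏ u, l (d u)) *
          (∏ u ∈ ({x, y, z} : Finset (Fin n)),
            (if d u = (if u = x then w.1 else if u = y then w.2.1 else w.2.2) then (1:ℝ) else 0)))
            * (P w.1 w.2.1 * P w.1 w.2.2) := fun d => by ring
    simp_rw [h2]
    rw [← Finset.sum_mul, aux_pinned' m n l hl1 ({x, y, z} : Finset (Fin n))
        (fun u => if u = x then w.1 else if u = y then w.2.1 else w.2.2)]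
    rw [Finset.prod_insert (by simp [hxy, hxz]), Finset.prod_insert (by simp [hyz]),
      Finset.prod_singleton]
    simp [hxy, hxz, hyz, Ne.symm hxy, Ne.symm hxz, Ne.symm hyz]
    ring
  simp_rw [main]
  rw [Fintype.sum_prod_type]
  refine Finset.sum_congr rfl fun i _ => ?_
  rw [Fintype.sum_prod_type]
  refine Finset.sum_congr rfl fun j _ => Finset.sum_congr rfl fun t _ => by ring

lemma aux_disjoint (m n : ℕ) (P : Fin m → Fin m → ℝ) (l : Fin m → ℝ) (hl1 : ∑ i, l i = 1)
    {x y z w : Fin n} (hxy : x ≠ y) (hxz : x ≠ z) (hxw : x ≠ w) (hyz : y ≠ z) (hyw : y ≠ w)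
    (hzw : z ≠ w) :
    ∑ d : Fin n → Fin m, (∏ u, l (d u)) * (P (d x) (d y) * P (d z) (d w))
      = (∑ i, ∑ j, P i j * l i * l j) * (∑ i, ∑ j, P i j * l i * l j) := by
  have key : ∀ d : Fin n → Fin m, P (d x) (d y) * P (d z) (d w)
      = ∑ q : (Fin m × Fin m) × (Fin m × Fin m),
          (∏ u ∈ ({x, y, z, w} : Finset (Fin n)),
            (if d u = (if u = x then q.1.1 else if u = y then q.1.2 else if u = z then q.2.1 else q.2.2) then (1:ℝ) else 0))
            * (P q.1.1 q.1.2 * P q.2.1 q.2.2) := by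
    intro d
    have hS : ∀ q : (Fin m × Fin m) × (Fin m × Fin m),
        (∏ u ∈ ({x, y, z, w} : Finset (Fin n)),
          (if d u = (if u = x then q.1.1 else if u = y then q.1.2 else if u = z then q.2.1 else q.2.2) then (1:ℝ) else 0))
        = (if d x = q.1.1 then (1:ℝ) else 0) * ((if d y = q.1.2 then (1:ℝ) else 0) *
            ((if d z = q.2.1 then (1:ℝ) else 0) * (if d w = q.2.2 then (1:ℝ) else 0))) := by
      intro q
      rw [Finset.prod_insert (by simp [hxy, hxz, hxw]), Finset.prod_insert (by simp [hyz, hyw]),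
        Finset.prod_insert (by simp [hzw]), Finset.prod_singleton]
      simp [hxy, hxz, hxw, hyz, hyw, hzw, Ne.symm hxy, Ne.symm hxz, Ne.symm hxw,
        Ne.symm hyz, Ne.symm hyw, Ne.symm hzw]
    simp_rw [hS]
    rw [Fintype.sum_prod_type]
    simp_rw [Fintype.sum_prod_type]
    simp [ite_mul, Finset.sum_ite_eq']
  simp_rw [key, Finset.mul_sum]
  rw [Finset.sum_comm]
  have main : ∀ q : (Fin m × Fin m) × (Fin m × Fin m),
      ∑ d : Fin n → Fin m,
        (∏ u, l (d u)) *
          ((∏ u ∈ ({x, y, z, w} : Finset (Fin n)),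
            (if d u = (if u = x then q.1.1 else if u = y then q.1.2 else if u = z then q.2.1 else q.2.2) then (1:ℝ) else 0))
            * (P q.1.1 q.1.2 * P q.2.1 q.2.2))
      = (P q.1.1 q.1.2 * P q.2.1 q.2.2) * (l q.1.1 * (l q.1.2 * (l q.2.1 * l q.2.2))) := by
    intro q
    have h2 : ∀ d : Fin n → Fin m,
        (∏ u, l (d u)) *
          ((∏ u ∈ ({x, y, z, w} : Finset (Fin n)),
            (if d u = (if u = x then q.1.1 else if u = y then q.1.2 else if u = z then q.2.1 else q.2.2) then (1:ℝ) else 0))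
            * (P q.1.1 q.1.2 * P q.2.1 q.2.2))
        = ((∏ u, l (d u)) *
          (∏ u ∈ ({x, y, z, w} : Finset (Fin n)),
            (if d u = (if u = x then q.1.1 else if u = y then q.1.2 else if u = z then q.2.1 else q.2.2) then (1:ℝ) else 0)))
            * (P q.1.1 q.1.2 * P q.2.1 q.2.2) := fun d => by ring
    simp_rw [h2]
    rw [← Finset.sum_mul, aux_pinned' m n l hl1 ({x, y, z, w} : Finset (Fin n))
        (fun u => if u = x then q.1.1 else if u = y then q.1.2 else if u = z then q.2.1 else q.2.2)]
    rw [Finset.prod_insert (by simp [hxy, hxz, hxw]), Finset.prod_insert (by simp [hyz, hyw]),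
      Finset.prod_insert (by simp [hzw]), Finset.prod_singleton]
    simp [hxy, hxz, hxw, hyz, hyw, hzw, Ne.symm hxy, Ne.symm hxz, Ne.symm hxw,
      Ne.symm hyz, Ne.symm hyw, Ne.symm hzw]
    ring
  simp_rw [main]
  have hterm : ∀ (a b : Fin m × Fin m),
      P a.1 a.2 * P b.1 b.2 * (l a.1 * (l a.2 * (l b.1 * l b.2)))
        = (P a.1 a.2 * l a.1 * l a.2) * (P b.1 b.2 * l b.1 * l b.2) := by intros; ring
  rw [Fintype.sum_prod_type]
  simp_rw [hterm]
  rw [← Finset.sum_mul_sum]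
  have hfac : ∑ a : Fin m × Fin m, P a.1 a.2 * l a.1 * l a.2
      = ∑ i, ∑ j, P i j * l i * l j := by rw [Fintype.sum_prod_type]
  rw [hfac]
  simp_rw [← Finset.mul_sum]

/-! ### Counting lemmas -/

lemma card_pairs (n : ℕ) : Fintype.card {p : Fin n × Fin n // p.1 < p.2} = n.choose 2 := by
  rw [Fintype.card_subtype]
  rw [Finset.card_filter]
  rw [Fintype.sum_prod_type]
  have h1 : ∀ a : Fin n, (∑ b : Fin n, if a < b then 1 else 0) = n - 1 - a := by
    intro a
    rw [← Finset.card_filter]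
    have : (Finset.filter (fun b => a < b) Finset.univ) = Finset.Ioi a := by
      ext b; simp
    rw [this, Fin.card_Ioi]
  simp_rw [h1]
  rw [Fin.sum_univ_eq_sum_range (fun i => n - 1 - i) n]
  rw [Finset.sum_range_reflect (fun i => i) n]
  rw [Finset.sum_range_id, Nat.choose_two_right]

lemma card_edges_at (n : ℕ) (v : Fin n) :
    (univ.filter fun p : {p : Fin n × Fin n // p.1 < p.2} =>
      p.1.1 = v ∨ p.1.2 = v).card = n - 1 := by
  have hcard : (univ.erase v).card = n - 1 := by
    rw [Finset.card_erase_of_mem (Finset.mem_univ v), Finset.card_univ, Fintype.card_fin]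
  rw [← hcard]
  refine Finset.card_bij' (fun p _ => if p.1.1 = v then p.1.2 else p.1.1)
    (fun x hx => if h : v < x then ⟨(v, x), h⟩
      else ⟨(x, v), lt_of_le_of_ne (not_lt.mp h) ((Finset.mem_erase.mp hx).1)⟩)
    ?_ ?_ ?_ ?_
  · intro p hp
    by_cases h1 : p.1.1 = v
    · rw [if_pos h1]
      refine Finset.mem_erase.mpr ⟨fun he => ?_, Finset.mem_univ _⟩
      exact absurd p.2 (by rw [h1, he]; exact lt_irrefl v)
    · rw [if_neg h1]
      exact Finset.mem_erase.mpr ⟨h1, Finset.mem_univ _⟩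
  · intro x hx
    by_cases h : v < x
    · rw [dif_pos h]
      exact Finset.mem_filter.mpr ⟨Finset.mem_univ _, Or.inl rfl⟩
    · rw [dif_neg h]
      exact Finset.mem_filter.mpr ⟨Finset.mem_univ _, Or.inr rfl⟩
  · intro p hp
    by_cases h1 : p.1.1 = v
    · have hv : v < (if p.1.1 = v then p.1.2 else p.1.1) := by
        rw [if_pos h1, ← h1]; exact p.2
      rw [dif_pos hv]
      refine Subtype.ext (Prod.ext_iff.mpr ⟨h1.symm, by simp [h1]⟩)
    · have h2 : p.1.2 = v := by
        rcases (Finset.mem_filter.mp hp).2 with h | h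
        · exact absurd h h1
        · exact h
      have hv : ¬ v < (if p.1.1 = v then p.1.2 else p.1.1) := by
        rw [if_neg h1]
        exact not_lt.mpr (le_of_lt (h2 ▸ p.2))
      rw [dif_neg hv]
      refine Subtype.ext (Prod.ext_iff.mpr ⟨by simp [h1], h2.symm⟩)
  · intro x hx
    by_cases h : v < x
    · rw [dif_pos h]
      simp
    · rw [dif_neg h]
      simp [(Finset.mem_erase.mp hx).1]

lemma share_count (n : ℕ) (p : {p : Fin n × Fin n // p.1 < p.2}) :
    (univ.filter fun p' : {p : Fin n × Fin n // p.1 < p.2} =>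
      p' ≠ p ∧ ((p'.1.1 = p.1.1 ∨ p'.1.2 = p.1.1) ∨ (p'.1.1 = p.1.2 ∨ p'.1.2 = p.1.2))).card
      = 2 * (n - 2) := by
  classical
  set A := univ.filter fun p' : {p : Fin n × Fin n // p.1 < p.2} =>
      p'.1.1 = p.1.1 ∨ p'.1.2 = p.1.1 with hA
  set B := univ.filter fun p' : {p : Fin n × Fin n // p.1 < p.2} =>
      p'.1.1 = p.1.2 ∨ p'.1.2 = p.1.2 with hB
  have hset : (univ.filter fun p' : {p : Fin n × Fin n // p.1 < p.2} =>
      p' ≠ p ∧ ((p'.1.1 = p.1.1 ∨ p'.1.2 = p.1.1) ∨ (p'.1.1 = p.1.2 ∨ p'.1.2 = p.1.2)))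
      = (A ∪ B).erase p := by
    ext p'
    simp only [hA, hB, Finset.mem_erase, Finset.mem_union, Finset.mem_filter, Finset.mem_univ,
      true_and]
  have hAB : A ∩ B = {p} := by
    ext p'
    simp only [hA, hB, Finset.mem_inter, Finset.mem_filter, Finset.mem_univ, true_and,
      Finset.mem_singleton]
    constructor
    · rintro ⟨h1 | h1, h2 | h2⟩
      · exact absurd p.2 (by rw [← h1, ← h2]; exact lt_irrefl _)
      · exact Subtype.ext (Prod.ext_iff.mpr ⟨h1, h2⟩)
      · exact absurd p'.2 (by rw [h2, h1]; exact not_lt.mpr (le_of_lt p.2))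
      · exact absurd p.2 (by rw [← h1, ← h2]; exact lt_irrefl _)
    · rintro rfl
      exact ⟨Or.inl rfl, Or.inr rfl⟩
  have hpA : p ∈ A ∪ B := Finset.mem_union_left _ (Finset.mem_filter.mpr ⟨Finset.mem_univ _, Or.inl rfl⟩)
  have hcardAB : (A ∪ B).card = (n - 1) + (n - 1) - 1 := by
    have h0 := Finset.card_union_add_card_inter A B
    have hcA : A.card = n - 1 := by rw [hA]; exact card_edges_at n p.1.1
    have hcB : B.card = n - 1 := by rw [hB]; exact card_edges_at n p.1.2
    rw [hAB, Finset.card_singleton, hcA, hcB] at h0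
    omega
  rw [hset, Finset.card_erase_of_mem hpA, hcardAB]
  have hn : 2 ≤ n := by
    have h1 : (p.1.1 : ℕ) < (p.1.2 : ℕ) := p.2
    have h2 : (p.1.2 : ℕ) < n := p.1.2.isLt
    omega
  omega

lemma aux_numEdges (n : ℕ) (E : {p : Fin n × Fin n // p.1 < p.2} → Bool) :
    (numEdges n E : ℝ) = ∑ p, (if E p then (1:ℝ) else 0) := by
  unfold numEdges
  rw [Finset.card_filter]
  push_cast
  simp

lemma aux_moment1 (m n k : ℕ) (P : Fin m → Fin m → ℝ) (l : Fin m → ℝ) :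
    ∑ E : {p : Fin n × Fin n // p.1 < p.2} → Bool,
        mfngLaw m n k P l E * (numEdges n E : ℝ)
      = ∑ p : {p : Fin n × Fin n // p.1 < p.2}, ∑ c : Fin n → Fin k → Fin m,
          (∏ u, ∏ r, l (c u r)) * ∏ r, P (c p.1.1 r) (c p.1.2 r) := by
  unfold mfngLaw
  simp_rw [Finset.sum_mul]
  rw [Finset.sum_comm]
  have hc : ∀ c : Fin n → Fin k → Fin m,
      ∑ E : {p : Fin n × Fin n // p.1 < p.2} → Bool,
        ((∏ u, ∏ r, l (c u r)) *
          ∏ p : {p : Fin n × Fin n // p.1 < p.2},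
            (if E p then ∏ r, P (c p.1.1 r) (c p.1.2 r)
             else 1 - ∏ r, P (c p.1.1 r) (c p.1.2 r))) * (numEdges n E : ℝ)
      = ∑ p : {p : Fin n × Fin n // p.1 < p.2},
          (∏ u, ∏ r, l (c u r)) * ∏ r, P (c p.1.1 r) (c p.1.2 r) := by
    intro c
    simp_rw [aux_numEdges, Finset.mul_sum]
    rw [Finset.sum_comm]
    refine Finset.sum_congr rfl fun p _ => ?_
    have h3 : ∀ E : {p : Fin n × Fin n // p.1 < p.2} → Bool,
        ((∏ u, ∏ r, l (c u r)) *
          ∏ x : {p : Fin n × Fin n // p.1 < p.2},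
            (if E x then ∏ r, P (c x.1.1 r) (c x.1.2 r)
             else 1 - ∏ r, P (c x.1.1 r) (c x.1.2 r))) * (if E p then (1:ℝ) else 0)
        = (∏ u, ∏ r, l (c u r)) *
            ((∏ x : {p : Fin n × Fin n // p.1 < p.2},
              (if E x then ∏ r, P (c x.1.1 r) (c x.1.2 r)
               else 1 - ∏ r, P (c x.1.1 r) (c x.1.2 r))) *
             ∏ x ∈ ({p} : Finset {p : Fin n × Fin n // p.1 < p.2}),
               (if E x then (1:ℝ) else 0)) := by
      intro E
      rw [Finset.prod_singleton]
      ring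
    simp_rw [h3]
    rw [← Finset.mul_sum,
      aux_bern (fun x : {p : Fin n × Fin n // p.1 < p.2} => ∏ r, P (c x.1.1 r) (c x.1.2 r)) {p},
      Finset.prod_singleton]
  simp_rw [hc]
  rw [Finset.sum_comm]

lemma aux_moment2 (m n k : ℕ) (P : Fin m → Fin m → ℝ) (l : Fin m → ℝ) :
    ∑ E : {p : Fin n × Fin n // p.1 < p.2} → Bool,
        mfngLaw m n k P l E * (numEdges n E : ℝ) ^ 2
      = ∑ p : {p : Fin n × Fin n // p.1 < p.2}, ∑ p' : {p : Fin n × Fin n // p.1 < p.2},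
          ∑ c : Fin n → Fin k → Fin m,
          (∏ u, ∏ r, l (c u r)) *
            ∏ x ∈ ({p, p'} : Finset {p : Fin n × Fin n // p.1 < p.2}),
              ∏ r, P (c x.1.1 r) (c x.1.2 r) := by
  unfold mfngLaw
  simp_rw [Finset.sum_mul]
  rw [Finset.sum_comm]
  have hsq : ∀ E : {p : Fin n × Fin n // p.1 < p.2} → Bool,
      (numEdges n E : ℝ) ^ 2
      = ∑ p : {p : Fin n × Fin n // p.1 < p.2}, ∑ p' : {p : Fin n × Fin n // p.1 < p.2},
          ∏ x ∈ ({p, p'} : Finset {p : Fin n × Fin n // p.1 < p.2}),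
            (if E x then (1:ℝ) else 0) := by
    intro E
    rw [sq, aux_numEdges, Finset.sum_mul_sum]
    refine Finset.sum_congr rfl fun p _ => Finset.sum_congr rfl fun p' _ => ?_
    by_cases hpp : p = p'
    · subst hpp
      by_cases hE : E p <;> simp [hE]
    · rw [Finset.prod_pair hpp]
  have hc : ∀ c : Fin n → Fin k → Fin m,
      ∑ E : {p : Fin n × Fin n // p.1 < p.2} → Bool,
        ((∏ u, ∏ r, l (c u r)) *
          ∏ p : {p : Fin n × Fin n // p.1 < p.2},
            (if E p then ∏ r, P (c p.1.1 r) (c p.1.2 r)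
             else 1 - ∏ r, P (c p.1.1 r) (c p.1.2 r))) * (numEdges n E : ℝ) ^ 2
      = ∑ p : {p : Fin n × Fin n // p.1 < p.2}, ∑ p' : {p : Fin n × Fin n // p.1 < p.2},
          (∏ u, ∏ r, l (c u r)) *
            ∏ x ∈ ({p, p'} : Finset {p : Fin n × Fin n // p.1 < p.2}),
              ∏ r, P (c x.1.1 r) (c x.1.2 r) := by
    intro c
    simp_rw [hsq, Finset.mul_sum]
    rw [Finset.sum_comm]
    refine Finset.sum_congr rfl fun p _ => ?_
    rw [Finset.sum_comm]
    refine Finset.sum_congr rfl fun p' _ => ?_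
    have h3 : ∀ E : {p : Fin n × Fin n // p.1 < p.2} → Bool,
        ((∏ u, ∏ r, l (c u r)) *
          ∏ x : {p : Fin n × Fin n // p.1 < p.2},
            (if E x then ∏ r, P (c x.1.1 r) (c x.1.2 r)
             else 1 - ∏ r, P (c x.1.1 r) (c x.1.2 r))) *
          ∏ x ∈ ({p, p'} : Finset {p : Fin n × Fin n // p.1 < p.2}),
            (if E x then (1:ℝ) else 0)
        = (∏ u, ∏ r, l (c u r)) *
            ((∏ x : {p : Fin n × Fin n // p.1 < p.2},
              (if E x then ∏ r, P (c x.1.1 r) (c x.1.2 r)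
               else 1 - ∏ r, P (c x.1.1 r) (c x.1.2 r))) *
             ∏ x ∈ ({p, p'} : Finset {p : Fin n × Fin n // p.1 < p.2}),
               (if E x then (1:ℝ) else 0)) := fun E => by ring
    simp_rw [h3]
    rw [← Finset.mul_sum,
      aux_bern (fun x : {p : Fin n × Fin n // p.1 < p.2} => ∏ r, P (c x.1.1 r) (c x.1.2 r)) {p, p'}]
  simp_rw [hc]
  rw [Finset.sum_comm]
  exact Finset.sum_congr rfl fun p _ => Finset.sum_comm


/-- the variance of the number of edges `|E|` of a depth-`k`
MFNG graph equals
`C(n,2) s^k (1 − C(n,2) s^k) + 2 n C(n−1,2) s₂^k + C(n,2) C(n−2,2) s^{2k}`,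
where `s = ∑ i j, p_{ij} l_i l_j` and
`s₂ = ∑ i j t, p_{ij} p_{it} l_i l_j l_t` (so `E[S₂] = n C(n−1,2) s₂^k`). -/
theorem mfng_edge_count_variance (m n k : ℕ)
    (P : Fin m → Fin m → ℝ)
    (hsymm : ∀ i j, P i j = P j i)
    (hP0 : ∀ i j, 0 ≤ P i j) (hP1 : ∀ i j, P i j ≤ 1)
    (l : Fin m → ℝ) (hl0 : ∀ i, 0 ≤ l i) (hl1 : ∑ i, l i = 1) :
    (∑ E : {p : Fin n × Fin n // p.1 < p.2} → Bool,
        mfngLaw m n k P l E * (numEdges n E : ℝ) ^ 2) -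
      (∑ E : {p : Fin n × Fin n // p.1 < p.2} → Bool,
        mfngLaw m n k P l E * (numEdges n E : ℝ)) ^ 2
    = (n.choose 2 : ℝ) * (∑ i, ∑ j, P i j * l i * l j) ^ k *
          (1 - (n.choose 2 : ℝ) * (∑ i, ∑ j, P i j * l i * l j) ^ k)
      + 2 * ((n : ℝ) * ((n - 1).choose 2 : ℝ) *
          (∑ i, ∑ j, ∑ t, P i j * P i t * l i * l j * l t) ^ k)
      + (n.choose 2 : ℝ) * ((n - 2).choose 2 : ℝ) *
          (∑ i, ∑ j, P i j * l i * l j) ^ (2 * k) := by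
  classical
  set s : ℝ := ∑ i, ∑ j, P i j * l i * l j with hs
  set s2 : ℝ := ∑ i, ∑ j, ∑ t, P i j * P i t * l i * l j * l t with hs2
  have hfv : ∀ x y : Fin n, (x:ℕ) ≠ (y:ℕ) → x ≠ y := fun x y h he => h (congrArg Fin.val he)
  -- single-edge evaluation
  have hedge : ∀ p : {p : Fin n × Fin n // p.1 < p.2},
      ∑ c : Fin n → Fin k → Fin m,
        (∏ u, ∏ r, l (c u r)) * ∏ r, P (c p.1.1 r) (c p.1.2 r) = s ^ k := by
    intro p
    have h1 : ∑ c : Fin n → Fin k → Fin m,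
        (∏ u, ∏ r, l (c u r)) * ∏ r, P (c p.1.1 r) (c p.1.2 r)
        = (∑ d : Fin n → Fin m, (∏ u, l (d u)) * P (d p.1.1) (d p.1.2)) ^ k :=
      aux_level m n k l (fun d => P (d p.1.1) (d p.1.2))
    rw [h1, aux_edge m n P l hl1 (ne_of_lt p.2), hs]
  -- two-edge evaluation
  have hpair : ∀ p p' : {p : Fin n × Fin n // p.1 < p.2}, p ≠ p' →
      ∑ c : Fin n → Fin k → Fin m,
        (∏ u, ∏ r, l (c u r)) *
          ∏ x ∈ ({p, p'} : Finset {p : Fin n × Fin n // p.1 < p.2}),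
            ∏ r, P (c x.1.1 r) (c x.1.2 r)
      = if ((p'.1.1 = p.1.1 ∨ p'.1.2 = p.1.1) ∨ (p'.1.1 = p.1.2 ∨ p'.1.2 = p.1.2))
          then s2 ^ k else (s * s) ^ k := by
    intro p p' hne
    have hprod : ∀ c : Fin n → Fin k → Fin m,
        (∏ x ∈ ({p, p'} : Finset {p : Fin n × Fin n // p.1 < p.2}),
            ∏ r, P (c x.1.1 r) (c x.1.2 r))
        = ∏ r, (P (c p.1.1 r) (c p.1.2 r) * P (c p'.1.1 r) (c p'.1.2 r)) := by
      intro c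
      rw [Finset.prod_pair hne, ← Finset.prod_mul_distrib]
    simp_rw [hprod]
    have h1 : ∑ c : Fin n → Fin k → Fin m,
        (∏ u, ∏ r, l (c u r)) * ∏ r, (P (c p.1.1 r) (c p.1.2 r) * P (c p'.1.1 r) (c p'.1.2 r))
        = (∑ d : Fin n → Fin m,
            (∏ u, l (d u)) * (P (d p.1.1) (d p.1.2) * P (d p'.1.1) (d p'.1.2))) ^ k :=
      aux_level m n k l (fun d => P (d p.1.1) (d p.1.2) * P (d p'.1.1) (d p'.1.2))
    rw [h1]
    have hab : (p.1.1:ℕ) < (p.1.2:ℕ) := p.2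
    have hab' : (p'.1.1:ℕ) < (p'.1.2:ℕ) := p'.2
    have hnum : ¬((p.1.1:ℕ) = (p'.1.1:ℕ) ∧ (p.1.2:ℕ) = (p'.1.2:ℕ)) := by
      rintro ⟨h1', h2'⟩
      exact hne (Subtype.ext (Prod.ext_iff.mpr ⟨Fin.ext h1', Fin.ext h2'⟩))
    by_cases hshare : ((p'.1.1 = p.1.1 ∨ p'.1.2 = p.1.1) ∨ (p'.1.1 = p.1.2 ∨ p'.1.2 = p.1.2))
    · rw [if_pos hshare]
      have hbase : ∑ d : Fin n → Fin m,
          (∏ u, l (d u)) * (P (d p.1.1) (d p.1.2) * P (d p'.1.1) (d p'.1.2)) = s2 := by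
        rcases hshare with (h | h) | (h | h)
        · have hc : (p'.1.1:ℕ) = (p.1.1:ℕ) := congrArg Fin.val h
          have e1 : ∀ d : Fin n → Fin m,
              P (d p'.1.1) (d p'.1.2) = P (d p.1.1) (d p'.1.2) := fun d => by rw [h]
          simp_rw [e1]
          rw [aux_wedge m n P l hl1 (hfv _ _ (by omega)) (hfv _ _ (by omega))
            (hfv _ _ (by omega)), hs2]
        · have hc : (p'.1.2:ℕ) = (p.1.1:ℕ) := congrArg Fin.val h
          have e1 : ∀ d : Fin n → Fin m,
              P (d p'.1.1) (d p'.1.2) = P (d p.1.1) (d p'.1.1) := fun d => by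
            rw [h]; exact hsymm _ _
          simp_rw [e1]
          rw [aux_wedge m n P l hl1 (hfv _ _ (by omega)) (hfv _ _ (by omega))
            (hfv _ _ (by omega)), hs2]
        · have hc : (p'.1.1:ℕ) = (p.1.2:ℕ) := congrArg Fin.val h
          have e1 : ∀ d : Fin n → Fin m,
              P (d p.1.1) (d p.1.2) = P (d p.1.2) (d p.1.1) := fun d => hsymm _ _
          have e2 : ∀ d : Fin n → Fin m,
              P (d p'.1.1) (d p'.1.2) = P (d p.1.2) (d p'.1.2) := fun d => by rw [h]
          simp_rw [e1, e2]
          rw [aux_wedge m n P l hl1 (hfv _ _ (by omega)) (hfv _ _ (by omega))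
            (hfv _ _ (by omega)), hs2]
        · have hc : (p'.1.2:ℕ) = (p.1.2:ℕ) := congrArg Fin.val h
          have e1 : ∀ d : Fin n → Fin m,
              P (d p.1.1) (d p.1.2) = P (d p.1.2) (d p.1.1) := fun d => hsymm _ _
          have e2 : ∀ d : Fin n → Fin m,
              P (d p'.1.1) (d p'.1.2) = P (d p.1.2) (d p'.1.1) := fun d => by
            rw [h]; exact hsymm _ _
          simp_rw [e1, e2]
          rw [aux_wedge m n P l hl1 (hfv _ _ (by omega)) (hfv _ _ (by omega))
            (hfv _ _ (by omega)), hs2]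
      rw [hbase]
    · rw [if_neg hshare]
      push_neg at hshare
      obtain ⟨⟨g1, g2⟩, g3, g4⟩ := hshare
      have hbase : ∑ d : Fin n → Fin m,
          (∏ u, l (d u)) * (P (d p.1.1) (d p.1.2) * P (d p'.1.1) (d p'.1.2)) = s * s := by
        rw [aux_disjoint m n P l hl1 (hfv _ _ (by omega)) (Ne.symm g1) (Ne.symm g2)
          (Ne.symm g3) (Ne.symm g4) (hfv _ _ (by omega)), hs]
      rw [hbase]
  -- first moment
  have hM1 : (∑ E : {p : Fin n × Fin n // p.1 < p.2} → Bool,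
      mfngLaw m n k P l E * (numEdges n E : ℝ)) = (n.choose 2 : ℝ) * s ^ k := by
    rw [aux_moment1]
    simp_rw [hedge]
    rw [Finset.sum_const, Finset.card_univ, card_pairs, nsmul_eq_mul]
  -- second moment
  have hM2 : (∑ E : {p : Fin n × Fin n // p.1 < p.2} → Bool,
      mfngLaw m n k P l E * (numEdges n E : ℝ) ^ 2)
      = ∑ p : {p : Fin n × Fin n // p.1 < p.2}, ∑ p' : {p : Fin n × Fin n // p.1 < p.2},
          (if p = p' then s ^ k
           else if ((p'.1.1 = p.1.1 ∨ p'.1.2 = p.1.1) ∨ (p'.1.1 = p.1.2 ∨ p'.1.2 = p.1.2))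
             then s2 ^ k else (s * s) ^ k) := by
    rw [aux_moment2]
    refine Finset.sum_congr rfl fun p _ => Finset.sum_congr rfl fun p' _ => ?_
    by_cases hpp : p = p'
    · subst hpp
      rw [if_pos rfl]
      have hpp2 : ({p, p} : Finset {p : Fin n × Fin n // p.1 < p.2}) = {p} := by simp
      rw [hpp2]
      simp_rw [Finset.prod_singleton]
      exact hedge p
    · rw [if_neg hpp]
      exact hpair p p' hpp
  -- split values
  have hsplit : ∀ p p' : {p : Fin n × Fin n // p.1 < p.2},
      (if p = p' then s ^ k
       else if ((p'.1.1 = p.1.1 ∨ p'.1.2 = p.1.1) ∨ (p'.1.1 = p.1.2 ∨ p'.1.2 = p.1.2))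
         then s2 ^ k else (s * s) ^ k)
      = (s * s) ^ k + (if p = p' then s ^ k - (s * s) ^ k else 0)
        + (if (p' ≠ p ∧ ((p'.1.1 = p.1.1 ∨ p'.1.2 = p.1.1) ∨ (p'.1.1 = p.1.2 ∨ p'.1.2 = p.1.2)))
            then s2 ^ k - (s * s) ^ k else 0) := by
    intro p p'
    by_cases h1 : p = p'
    · subst h1
      simp
    · by_cases h2 : ((p'.1.1 = p.1.1 ∨ p'.1.2 = p.1.1) ∨ (p'.1.1 = p.1.2 ∨ p'.1.2 = p.1.2))
      · simp [h1, Ne.symm h1, h2]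
      · simp [h1, Ne.symm h1, h2]
  simp_rw [hsplit] at hM2
  rw [hM2]
  simp_rw [Finset.sum_add_distrib]
  have hA : ∑ _p : {p : Fin n × Fin n // p.1 < p.2}, ∑ _p' : {p : Fin n × Fin n // p.1 < p.2},
      (s * s) ^ k = (n.choose 2 : ℝ) * ((n.choose 2 : ℝ) * (s * s) ^ k) := by
    simp [Finset.sum_const, Finset.card_univ, card_pairs, nsmul_eq_mul]
  have hB : ∑ p : {p : Fin n × Fin n // p.1 < p.2}, ∑ p' : {p : Fin n × Fin n // p.1 < p.2},
      (if p = p' then s ^ k - (s * s) ^ k else 0)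
      = (n.choose 2 : ℝ) * (s ^ k - (s * s) ^ k) := by
    have hone : ∀ p : {p : Fin n × Fin n // p.1 < p.2},
        ∑ p' : {p : Fin n × Fin n // p.1 < p.2}, (if p = p' then s ^ k - (s * s) ^ k else 0)
        = s ^ k - (s * s) ^ k := by
      intro p
      rw [Finset.sum_ite_eq]
      simp
    simp_rw [hone]
    rw [Finset.sum_const, Finset.card_univ, card_pairs, nsmul_eq_mul]
  have hC : ∑ p : {p : Fin n × Fin n // p.1 < p.2}, ∑ p' : {p : Fin n × Fin n // p.1 < p.2},
      (if (p' ≠ p ∧ ((p'.1.1 = p.1.1 ∨ p'.1.2 = p.1.1) ∨ (p'.1.1 = p.1.2 ∨ p'.1.2 = p.1.2)))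
        then s2 ^ k - (s * s) ^ k else 0)
      = (n.choose 2 : ℝ) * (((2 * (n - 2) : ℕ) : ℝ) * (s2 ^ k - (s * s) ^ k)) := by
    have hone : ∀ p : {p : Fin n × Fin n // p.1 < p.2},
        ∑ p' : {p : Fin n × Fin n // p.1 < p.2},
          (if (p' ≠ p ∧ ((p'.1.1 = p.1.1 ∨ p'.1.2 = p.1.1) ∨ (p'.1.1 = p.1.2 ∨ p'.1.2 = p.1.2)))
            then s2 ^ k - (s * s) ^ k else 0)
        = ((2 * (n - 2) : ℕ) : ℝ) * (s2 ^ k - (s * s) ^ k) := by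
      intro p
      rw [Finset.sum_ite, Finset.sum_const, Finset.sum_const_zero, add_zero,
        share_count n p, nsmul_eq_mul]
    simp_rw [hone]
    rw [Finset.sum_const, Finset.card_univ, card_pairs, nsmul_eq_mul]
  rw [hA, hB, hC, hM1]
  -- final arithmetic
  have idA : (n.choose 2 : ℝ) * ((2 * (n - 2) : ℕ) : ℝ)
      = 2 * ((n : ℝ) * ((n - 1).choose 2 : ℝ)) := by
    rcases n with _ | _ | N
    · simp
    · simp
    · simp only [show Nat.succ (Nat.succ N) - 1 = N + 1 from rfl,
        show Nat.succ (Nat.succ N) - 2 = N from rfl]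
      rw [Nat.cast_choose_two, Nat.cast_choose_two]
      push_cast
      ring
  have idB : (n.choose 2 : ℝ) * ((n - 2).choose 2 : ℝ)
      = (n.choose 2 : ℝ) * (n.choose 2 : ℝ) - (n.choose 2 : ℝ)
        - (n.choose 2 : ℝ) * ((2 * (n - 2) : ℕ) : ℝ) := by
    rcases n with _ | _ | N
    · simp
    · simp
    · simp only [show Nat.succ (Nat.succ N) - 2 = N from rfl]
      rw [Nat.cast_choose_two, Nat.cast_choose_two]
      push_cast
      ring
  have hpow : s ^ (2 * k) = (s * s) ^ k := by
    rw [two_mul, pow_add, mul_pow]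
  rw [hpow]
  linear_combination (s2 ^ k) * idA - ((s * s) ^ k) * idB
end
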